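/- In the modified AKV model, if M < N−1 then there exists a state ρ with ℒ_*(ρ) = 0 which satisfies tr(ρ |ψ⟩⟨e_1|) = 0, tr(ρ Z) = 0 and tr(ρ |e_0⟩⟨ψ'|) = 0 (i.e., ρ lies in the annihilator of all Kraus operators), yet ρ does not commute with P_0; in particular ρ does not commute with the reference Hamiltonian H := ε_1 P_1 + ε_2 P_2 + ε_3 P_3 for any choice of distinct positive ε_1, ε_2, ε_3. -/

import Mathlib

noncomputable section

open ContinuousLinearMap Finset
open scoped InnerProductSpace

/-- The Hilbert space ℂ^(N+M+1) of the modified AKV model. -/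
abbrev AKVSpace (N M : ℕ) := EuclideanSpace ℂ (Fin (N + M + 1))

namespace AKV

variable (N M : ℕ)

/-- standard basis vector -/
def ket (i : Fin (N + M + 1)) : AKVSpace N M := EuclideanSpace.single i 1

/-- rank-one operator |u⟩⟨v| : x ↦ ⟪v, x⟫ • u -/
def ketbra (u v : AKVSpace N M) : AKVSpace N M →L[ℂ] AKVSpace N M :=
  (innerSL ℂ v).smulRight u

/-- indices 2,…,N of the second level -/
def idx2 : Finset (Fin (N + M + 1)) := univ.filter fun i => 2 ≤ (i : ℕ) ∧ (i : ℕ) ≤ N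
/-- indices N+1,…,N+M of the third level -/
def idx3 : Finset (Fin (N + M + 1)) := univ.filter fun i => N + 1 ≤ (i : ℕ)

/-- orthogonal projection onto span{e_0} -/
def P0 : AKVSpace N M →L[ℂ] AKVSpace N M := ketbra N M (ket N M 0) (ket N M 0)
/-- orthogonal projection onto span{e_1} -/
def P1 : AKVSpace N M →L[ℂ] AKVSpace N M := ketbra N M (ket N M 1) (ket N M 1)
/-- orthogonal projection onto span{e_2,…,e_N} -/
def P2 : AKVSpace N M →L[ℂ] AKVSpace N M := ∑ i ∈ idx2 N M, ketbra N M (ket N M i) (ket N M i)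
/-- orthogonal projection onto span{e_{N+1},…,e_{N+M}} -/
def P3 : AKVSpace N M →L[ℂ] AKVSpace N M := ∑ i ∈ idx3 N M, ketbra N M (ket N M i) (ket N M i)

/-- ψ = e_2 + ⋯ + e_N -/
def psi : AKVSpace N M := ∑ i ∈ idx2 N M, ket N M i
/-- ψ' = e_{N+1} + ⋯ + e_{N+M} -/
def psi' : AKVSpace N M := ∑ i ∈ idx3 N M, ket N M i

/-- |Z| = Z⋆Z -/
def absZ (Z : AKVSpace N M →L[ℂ] AKVSpace N M) : AKVSpace N M →L[ℂ] AKVSpace N M :=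
  adjoint Z * Z

/-- hypotheses on the interference operator Z of the modified AKV model -/
def IsAKVZ (hM : 1 ≤ M) (Z : AKVSpace N M →L[ℂ] AKVSpace N M) : Prop :=
  Z = P3 N M * Z * P2 N M ∧
  Z * adjoint Z = P3 N M ∧
  Z (ket N M ⟨N - 1, by omega⟩) = ((Real.sqrt ((N : ℝ) - 1))⁻¹ : ℂ) • psi' N M ∧
  adjoint Z (ket N M ⟨N + 1, by omega⟩) = ((Real.sqrt ((N : ℝ) - 1))⁻¹ : ℂ) • psi N M

/-- the five Kraus operators -/
def kraus (Γ1m Γ1p Γ2m Γ2p Γ3m : ℝ) (Z : AKVSpace N M →L[ℂ] AKVSpace N M) :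
    Fin 5 → AKVSpace N M →L[ℂ] AKVSpace N M :=
  ![((Real.sqrt (2 * Γ1m) : ℝ) : ℂ) • ketbra N M (psi N M) (ket N M 1),
    ((Real.sqrt (2 * ((N : ℝ) - 1) * Γ2m) : ℝ) : ℂ) • Z,
    ((Real.sqrt (2 * Γ3m) : ℝ) : ℂ) • ketbra N M (ket N M 0) (psi' N M),
    ((Real.sqrt (2 * Γ1p) : ℝ) : ℂ) • ketbra N M (ket N M 1) (psi N M),
    ((Real.sqrt (2 * ((N : ℝ) - 1) * Γ2p) : ℝ) : ℂ) • adjoint Z]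

/-- the effective Hamiltonian -/
def Heff (γ1m γ1p γ2m γ2p γ3m : ℝ) (Z : AKVSpace N M →L[ℂ] AKVSpace N M) :
    AKVSpace N M →L[ℂ] AKVSpace N M :=
  (γ1p : ℂ) • ketbra N M (psi N M) (psi N M)
    - (((N : ℂ) - 1) * (γ1m : ℂ)) • ketbra N M (ket N M 1) (ket N M 1)
    + (((N : ℂ) - 1) * (γ2p : ℂ)) • P3 N M
    - (((N : ℂ) - 1) * (γ2m : ℂ)) • absZ N M Z
    - (γ3m : ℂ) • ketbra N M (psi' N M) (psi' N M)

/-- the predual GKSL generator ℒ_* of the modified AKV model -/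
def Lstar (Γ1m Γ1p Γ2m Γ2p Γ3m γ1m γ1p γ2m γ2p γ3m : ℝ)
    (Z ρ : AKVSpace N M →L[ℂ] AKVSpace N M) : AKVSpace N M →L[ℂ] AKVSpace N M :=
  -Complex.I • (Heff N M γ1m γ1p γ2m γ2p γ3m Z * ρ - ρ * Heff N M γ1m γ1p γ2m γ2p γ3m Z)
    + ∑ k : Fin 5,
        (kraus N M Γ1m Γ1p Γ2m Γ2p Γ3m Z k * ρ * adjoint (kraus N M Γ1m Γ1p Γ2m Γ2p Γ3m Z k)
          - (1 / 2 : ℂ) • (adjoint (kraus N M Γ1m Γ1p Γ2m Γ2p Γ3m Z k) *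
                kraus N M Γ1m Γ1p Γ2m Γ2p Γ3m Z k * ρ
              + ρ * (adjoint (kraus N M Γ1m Γ1p Γ2m Γ2p Γ3m Z k) *
                kraus N M Γ1m Γ1p Γ2m Γ2p Γ3m Z k)))

/-- a state: positive semidefinite with trace one -/
def IsState (ρ : AKVSpace N M →L[ℂ] AKVSpace N M) : Prop :=
  ρ.IsPositive ∧ LinearMap.trace ℂ (AKVSpace N M) ↑ρ = 1

/-- the interaction-free subspace W_D -/
def WD (Z : AKVSpace N M →L[ℂ] AKVSpace N M) : Submodule ℂ (AKVSpace N M) :=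
  (Submodule.span ℂ {ket N M 1, psi N M, psi' N M})ᗮ ⊓
    LinearMap.ker (Z : AKVSpace N M →ₗ[ℂ] AKVSpace N M) ⊓ LinearMap.ker (adjoint Z : AKVSpace N M →ₗ[ℂ] AKVSpace N M)

/-- the subspace V = {e_0, e_1, ψ, ψ', Zψ, Z⋆ψ'}^⊥ -/
def Vsub (Z : AKVSpace N M →L[ℂ] AKVSpace N M) : Submodule ℂ (AKVSpace N M) :=
  (Submodule.span ℂ
    {ket N M 0, ket N M 1, psi N M, psi' N M, Z (psi N M), adjoint Z (psi' N M)})ᗮ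

/-- Im|Z| ∩ {ψ, Z⋆ψ'}^⊥ -/
def subA (Z : AKVSpace N M →L[ℂ] AKVSpace N M) : Submodule ℂ (AKVSpace N M) :=
  LinearMap.range (absZ N M Z : AKVSpace N M →ₗ[ℂ] AKVSpace N M) ⊓ (Submodule.span ℂ {psi N M, adjoint Z (psi' N M)})ᗮ

/-- ran P₃ ∩ {ψ', Zψ}^⊥ -/
def subB (Z : AKVSpace N M →L[ℂ] AKVSpace N M) : Submodule ℂ (AKVSpace N M) :=
  LinearMap.range (P3 N M : AKVSpace N M →ₗ[ℂ] AKVSpace N M) ⊓ (Submodule.span ℂ {psi' N M, Z (psi N M)})ᗮ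

/-- the orthogonal projection onto a subspace, as an operator on the whole space -/
def projOp (U : Submodule ℂ (AKVSpace N M)) : AKVSpace N M →L[ℂ] AKVSpace N M :=
  U.subtypeL ∘L U.orthogonalProjectionOnto


variable {N M : ℕ}

lemma ketbra_apply (u v x : AKVSpace N M) : ketbra N M u v x = ⟪v, x⟫_ℂ • u := rfl

lemma inner_ket (i j : Fin (N + M + 1)) :
    ⟪ket N M i, ket N M j⟫_ℂ = if i = j then 1 else 0 := by
  simp [ket, EuclideanSpace.inner_single_left, EuclideanSpace.single_apply, eq_comm]

lemma adjoint_ketbra (u v : AKVSpace N M) :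
    adjoint (ketbra N M u v) = ketbra N M v u := by
  symm
  rw [eq_adjoint_iff]
  intro x y
  simp only [ketbra_apply, inner_smul_left, inner_smul_right, inner_conj_symm]
  ring

lemma trace_ketbra (u v : AKVSpace N M) :
    LinearMap.trace ℂ (AKVSpace N M) ↑(ketbra N M u v) = ⟪v, u⟫_ℂ := by
  have h : (↑(ketbra N M u v) : AKVSpace N M →ₗ[ℂ] AKVSpace N M)
      = (LinearMap.toSpanSingleton ℂ (AKVSpace N M) u) ∘ₗ (innerSL ℂ v : AKVSpace N M →L[ℂ] ℂ) := by
    ext x; rfl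
  rw [h, LinearMap.trace_comp_comm']
  have h2 : ((innerSL ℂ v : AKVSpace N M →L[ℂ] ℂ) : AKVSpace N M →ₗ[ℂ] ℂ) ∘ₗ
      (LinearMap.toSpanSingleton ℂ (AKVSpace N M) u) = ⟪v, u⟫_ℂ • LinearMap.id := by
    ext
    simp [LinearMap.toSpanSingleton, inner_smul_right]
  rw [h2, map_smul, LinearMap.trace_id]
  simp

lemma P2_apply (x : AKVSpace N M) :
    P2 N M x = ∑ i ∈ idx2 N M, ⟪ket N M i, x⟫_ℂ • ket N M i := by
  simp [P2, ContinuousLinearMap.sum_apply, ketbra_apply]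

lemma P3_apply (x : AKVSpace N M) :
    P3 N M x = ∑ i ∈ idx3 N M, ⟪ket N M i, x⟫_ℂ • ket N M i := by
  simp [P3, ContinuousLinearMap.sum_apply, ketbra_apply]

lemma mem_idx2 {i : Fin (N + M + 1)} : i ∈ idx2 N M ↔ 2 ≤ (i : ℕ) ∧ (i : ℕ) ≤ N := by
  simp [idx2]

lemma mem_idx3 {i : Fin (N + M + 1)} : i ∈ idx3 N M ↔ N + 1 ≤ (i : ℕ) := by
  simp [idx3]

/-- the span of the second-level kets -/
def S2 (N M : ℕ) : Submodule ℂ (AKVSpace N M) :=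
  Submodule.span ℂ (Set.range fun i : (idx2 N M) => ket N M i)

lemma inner_ket_S2 {u : AKVSpace N M} (hu : u ∈ S2 N M) {i : Fin (N + M + 1)}
    (hi : i ∉ idx2 N M) : ⟪ket N M i, u⟫_ℂ = 0 := by
  have hle : S2 N M ≤ LinearMap.ker ((innerSL ℂ (ket N M i) : AKVSpace N M →L[ℂ] ℂ) : AKVSpace N M →ₗ[ℂ] ℂ) := by
    rw [S2, Submodule.span_le]
    rintro _ ⟨j, rfl⟩
    simp only [SetLike.mem_coe, LinearMap.mem_ker, ContinuousLinearMap.coe_coe, innerSL_apply_apply, inner_ket]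
    have : i ≠ (j : Fin (N + M + 1)) := fun h => hi (h ▸ j.2)
    simp [this]
  simpa using hle hu

lemma P2_ket_of_mem {j : Fin (N + M + 1)} (hj : j ∈ idx2 N M) :
    P2 N M (ket N M j) = ket N M j := by
  rw [P2_apply]
  rw [Finset.sum_eq_single j]
  · rw [inner_ket]; simp
  · intro i hi hij; rw [inner_ket]; simp [hij]
  · intro h; exact absurd hj h

lemma P2_S2 {u : AKVSpace N M} (hu : u ∈ S2 N M) : P2 N M u = u := by
  have hle : S2 N M ≤ LinearMap.ker ((P2 N M - 1 : AKVSpace N M →L[ℂ] AKVSpace N M) : AKVSpace N M →ₗ[ℂ] AKVSpace N M) := by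
    rw [S2, Submodule.span_le]
    rintro _ ⟨j, rfl⟩
    simp only [SetLike.mem_coe, LinearMap.mem_ker, ContinuousLinearMap.coe_coe, ContinuousLinearMap.sub_apply,
      ContinuousLinearMap.one_apply, P2_ket_of_mem j.2, sub_self]
  have := hle hu
  simp only [LinearMap.mem_ker, ContinuousLinearMap.coe_coe, ContinuousLinearMap.sub_apply,
    ContinuousLinearMap.one_apply, sub_eq_zero] at this
  exact this

lemma P3_S2 {u : AKVSpace N M} (hu : u ∈ S2 N M) : P3 N M u = 0 := by
  rw [P3_apply]
  apply Finset.sum_eq_zero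
  intro i hi
  have : i ∉ idx2 N M := by
    rw [mem_idx3] at hi; rw [mem_idx2]; omega
  rw [inner_ket_S2 hu this, zero_smul]

lemma card_idx2_ge (hN : 3 ≤ N) : N - 1 ≤ (idx2 N M).card := by
  have := Finset.card_le_card_of_injOn
    (f := fun k : ℕ => (⟨(k + 2) % (N + M + 1), Nat.mod_lt _ (by omega)⟩ : Fin (N + M + 1)))
    (s := Finset.range (N - 1)) (t := idx2 N M)
    (by
      intro k hk
      rw [Finset.mem_coe, Finset.mem_range] at hk
      rw [Finset.mem_coe, mem_idx2]
      simp only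
      rw [Nat.mod_eq_of_lt (by omega)]
      omega)
    (by
      intro a ha b hb hab
      rw [Finset.coe_range, Set.mem_Iio] at ha hb
      have : (a + 2) % (N + M + 1) = (b + 2) % (N + M + 1) := congrArg Fin.val hab
      rw [Nat.mod_eq_of_lt (by omega), Nat.mod_eq_of_lt (by omega)] at this
      omega)
  simpa using this

lemma card_idx3_le : (idx3 N M).card ≤ M := by
  have := Finset.card_le_card_of_injOn (f := fun i : Fin (N + M + 1) => (i : ℕ) - (N + 1))
    (s := idx3 N M) (t := Finset.range M)
    (by
      intro i hi
      rw [Finset.mem_coe, mem_idx3] at hi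
      rw [Finset.mem_coe, Finset.mem_range]
      show (i : ℕ) - (N + 1) < M
      have := i.2
      omega)
    (by
      intro a ha b hb hab
      rw [Finset.mem_coe, mem_idx3] at ha hb
      simp only at hab
      exact Fin.ext (by omega))
  simpa using this

lemma exists_u0 (hN : 3 ≤ N) (hM2 : M < N - 1) (Z : AKVSpace N M →L[ℂ] AKVSpace N M)
    (hZ1 : Z = P3 N M * Z * P2 N M) :
    ∃ u0 : AKVSpace N M, u0 ≠ 0 ∧ Z u0 = 0 ∧ u0 ∈ S2 N M := by
  classical
  set v : (idx2 N M) → AKVSpace N M := fun i => ket N M i with hv_def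
  have hv : Orthonormal ℂ v :=
    EuclideanSpace.orthonormal_single.comp (fun i : (idx2 N M) => (i : Fin (N + M + 1)))
      Subtype.val_injective
  have hfinrank : Module.finrank ℂ (S2 N M) = (idx2 N M).card := by
    rw [S2, finrank_span_eq_card hv.linearIndependent, Fintype.card_coe]
  set T3 : Submodule ℂ (AKVSpace N M) :=
    Submodule.span ℂ (Set.range fun i : (idx3 N M) => ket N M i) with hT3_def
  set f : (S2 N M) →ₗ[ℂ] AKVSpace N M :=
    (Z : AKVSpace N M →ₗ[ℂ] AKVSpace N M) ∘ₗ (S2 N M).subtype with hf_def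
  have hP3mem : ∀ y : AKVSpace N M, P3 N M y ∈ T3 := by
    intro y
    rw [P3_apply]
    refine Submodule.sum_mem _ fun i hi => Submodule.smul_mem _ _ ?_
    exact Submodule.subset_span ⟨⟨i, hi⟩, rfl⟩
  have hrange : LinearMap.range f ≤ T3 := by
    rintro _ ⟨x, rfl⟩
    have : f x = P3 N M (Z (P2 N M (x : AKVSpace N M))) := by
      show Z (x : AKVSpace N M) = _
      conv_lhs => rw [hZ1]
      rfl
    rw [this]
    exact hP3mem _
  have hT3rank : Module.finrank ℂ T3 ≤ M := by
    have h1 : Module.finrank ℂ T3 ≤ Fintype.card (idx3 N M) := by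
      rw [hT3_def]
      exact finrank_span_le_card _ |>.trans (by
        rw [Set.toFinset_range]
        exact (Finset.card_image_le).trans (by simp))
    rw [Fintype.card_coe] at h1
    exact h1.trans card_idx3_le
  have hrankf : Module.finrank ℂ (LinearMap.range f) ≤ M :=
    (Submodule.finrank_mono hrange).trans hT3rank
  have hsum := LinearMap.finrank_range_add_finrank_ker f
  have hker : LinearMap.ker f ≠ ⊥ := by
    intro hbot
    rw [hbot, finrank_bot] at hsum
    have h2 := card_idx2_ge (M := M) hN
    omega
  obtain ⟨w, hw, hw0⟩ := (Submodule.ne_bot_iff _).mp hker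
  exact ⟨(w : AKVSpace N M), by simpa using hw0, hw, w.2⟩

lemma mul_ketbra_eq_zero {A : AKVSpace N M →L[ℂ] AKVSpace N M} {φ : AKVSpace N M}
    (h : A φ = 0) : A * ketbra N M φ φ = 0 := by
  ext x
  simp [ContinuousLinearMap.mul_apply, ketbra_apply, h]

lemma ketbra_mul_eq_zero {A : AKVSpace N M →L[ℂ] AKVSpace N M} {φ : AKVSpace N M}
    (h : ∀ x, ⟪φ, A x⟫_ℂ = 0) : ketbra N M φ φ * A = 0 := by
  ext x
  simp [ContinuousLinearMap.mul_apply, ketbra_apply, h x]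

lemma summand_zero {L : AKVSpace N M →L[ℂ] AKVSpace N M} {φ : AKVSpace N M}
    (hL : L φ = 0) :
    L * ketbra N M φ φ * adjoint L - (1 / 2 : ℂ) • (adjoint L * L * ketbra N M φ φ
      + ketbra N M φ φ * (adjoint L * L)) = 0 := by
  have h1 : L * ketbra N M φ φ = 0 := mul_ketbra_eq_zero hL
  have h2 : adjoint L * L * ketbra N M φ φ = 0 := by rw [mul_assoc, h1, mul_zero]
  have h3 : ketbra N M φ φ * (adjoint L * L) = 0 := by
    refine ketbra_mul_eq_zero fun x => ?_
    rw [ContinuousLinearMap.mul_apply, adjoint_inner_right, hL, inner_zero_left]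
  rw [h1, h2, h3]
  simp

set_option synthInstance.maxHeartbeats 400000 in
set_option maxHeartbeats 1600000 in
/-- In the modified AKV model, if `M < N − 1` then there is an invariant state lying in the
annihilator of all Kraus operators which does not commute with `P₀`, hence does not commute
with the reference Hamiltonian `H = ε₁P₁ + ε₂P₂ + ε₃P₃` for any distinct positive
`ε₁, ε₂, ε₃`. -/
theorem exists_invariant_in_annihilator_not_in_commutant
    (N M : ℕ) (hN : 3 ≤ N) (hM1 : 1 ≤ M) (hM2 : M < N - 1)
    (Γ1m Γ1p Γ2m Γ2p Γ3m γ1m γ1p γ2m γ2p γ3m : ℝ)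
    (hΓ : 0 < Γ1m ∧ 0 < Γ1p ∧ 0 < Γ2m ∧ 0 < Γ2p ∧ 0 < Γ3m)
    (hγ : 0 < γ1m ∧ 0 < γ1p ∧ 0 < γ2m ∧ 0 < γ2p ∧ 0 < γ3m)
    (Z : AKVSpace N M →L[ℂ] AKVSpace N M) (hZ : IsAKVZ N M hM1 Z) :
    ∃ ρ : AKVSpace N M →L[ℂ] AKVSpace N M, IsState N M ρ ∧
      Lstar N M Γ1m Γ1p Γ2m Γ2p Γ3m γ1m γ1p γ2m γ2p γ3m Z ρ = 0 ∧
      LinearMap.trace ℂ (AKVSpace N M) ↑(ρ * ketbra N M (psi N M) (ket N M 1)) = 0 ∧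
      LinearMap.trace ℂ (AKVSpace N M) ↑(ρ * Z) = 0 ∧
      LinearMap.trace ℂ (AKVSpace N M) ↑(ρ * ketbra N M (ket N M 0) (psi' N M)) = 0 ∧
      ρ * P0 N M ≠ P0 N M * ρ ∧
      ∀ ε1 ε2 ε3 : ℝ, 0 < ε1 → 0 < ε2 → 0 < ε3 → ε1 ≠ ε2 → ε1 ≠ ε3 → ε2 ≠ ε3 →
        ρ * ((ε1 : ℂ) • P1 N M + (ε2 : ℂ) • P2 N M + (ε3 : ℂ) • P3 N M)
          ≠ ((ε1 : ℂ) • P1 N M + (ε2 : ℂ) • P2 N M + (ε3 : ℂ) • P3 N M) * ρ := by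
  classical
  obtain ⟨hZ1, hZ2, hZ3, hZ4⟩ := hZ
  obtain ⟨u0, hu0ne, hZu0, hu0S2⟩ := exists_u0 hN hM2 Z hZ1
  -- basic index facts
  have hval0 : ((0 : Fin (N + M + 1)) : ℕ) = 0 := rfl
  have hval1 : ((1 : Fin (N + M + 1)) : ℕ) = 1 := by
    rw [Fin.val_one']
    exact Nat.mod_eq_of_lt (by omega)
  have h0idx2 : (0 : Fin (N + M + 1)) ∉ idx2 N M := by rw [mem_idx2, hval0]; omega
  have h1idx2 : (1 : Fin (N + M + 1)) ∉ idx2 N M := by rw [mem_idx2, hval1]; omega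
  have h0idx3 : (0 : Fin (N + M + 1)) ∉ idx3 N M := by rw [mem_idx3, hval0]; omega
  have h1idx3 : (1 : Fin (N + M + 1)) ∉ idx3 N M := by rw [mem_idx3, hval1]; omega
  have hdisj : ∀ i ∈ idx3 N M, i ∉ idx2 N M := by
    intro i hi
    rw [mem_idx3] at hi; rw [mem_idx2]; omega
  -- inner products of kets with u0
  have hketu0 : ∀ i ∉ idx2 N M, ⟪ket N M i, u0⟫_ℂ = 0 := fun i hi => inner_ket_S2 hu0S2 hi
  have hP3u0 : P3 N M u0 = 0 := P3_S2 hu0S2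
  have hP2u0 : P2 N M u0 = u0 := P2_S2 hu0S2
  -- adjoint Z kills u0
  have hZsu0 : adjoint Z u0 = 0 := by
    rw [← inner_self_eq_zero (𝕜 := ℂ)]
    rw [adjoint_inner_left]
    have : Z (adjoint Z u0) = (Z * adjoint Z) u0 := rfl
    rw [this, hZ2, hP3u0, inner_zero_right]
  -- ψ ⟂ u0
  have hsqrt_ne : ((Real.sqrt ((N : ℝ) - 1))⁻¹ : ℂ) ≠ 0 := by
    have h1 : (0 : ℝ) < Real.sqrt ((N : ℝ) - 1) := Real.sqrt_pos.2 (by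
      have : (3 : ℝ) ≤ (N : ℝ) := by exact_mod_cast hN
      linarith)
    simp only [ne_eq, Complex.ofReal_eq_zero, inv_eq_zero]
    exact h1.ne'
  have hpsiu0 : ⟪psi N M, u0⟫_ℂ = 0 := by
    have h1 : ⟪adjoint Z (ket N M ⟨N + 1, by omega⟩), u0⟫_ℂ = 0 := by
      rw [adjoint_inner_left, hZu0, inner_zero_right]
    rw [hZ4, inner_smul_left] at h1
    rw [map_inv₀, Complex.conj_ofReal] at h1
    exact (mul_eq_zero.mp h1).resolve_left hsqrt_ne
  -- normalize u0
  set c0 : ℂ := ((‖u0‖⁻¹ : ℝ) : ℂ) with hc0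
  set u : AKVSpace N M := c0 • u0 with hu
  have hn0 : ‖u0‖ ≠ 0 := norm_ne_zero_iff.2 hu0ne
  have hketu : ∀ i ∉ idx2 N M, ⟪ket N M i, u⟫_ℂ = 0 := by
    intro i hi; rw [hu, inner_smul_right, hketu0 i hi, mul_zero]
  have hZu : Z u = 0 := by rw [hu, map_smul, hZu0, smul_zero]
  have hZsu : adjoint Z u = 0 := by rw [hu, map_smul, hZsu0, smul_zero]
  have hP3u : P3 N M u = 0 := by rw [hu, map_smul, hP3u0, smul_zero]
  have hP2u : P2 N M u = u := by rw [hu, map_smul, hP2u0]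
  have hpsiu : ⟪psi N M, u⟫_ℂ = 0 := by rw [hu, inner_smul_right, hpsiu0, mul_zero]
  have huu : ⟪u, u⟫_ℂ = 1 := by
    rw [hu, inner_smul_left, inner_smul_right, hc0, Complex.conj_ofReal]
    rw [inner_self_eq_norm_sq_to_K (𝕜 := ℂ)]
    push_cast
    have hcn : (‖u0‖ : ℂ) ≠ 0 := by exact_mod_cast hn0
    field_simp
    rfl
  -- the vector φ
  set c2 : ℂ := (((Real.sqrt 2)⁻¹ : ℝ) : ℂ) with hc2
  set e0 : AKVSpace N M := ket N M 0 with he0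
  set φ : AKVSpace N M := c2 • (e0 + u) with hφ
  have hc2conj : (starRingEnd ℂ) c2 = c2 := Complex.conj_ofReal _
  have hc2sq : c2 * c2 = 1 / 2 := by
    rw [hc2, ← Complex.ofReal_mul, ← mul_inv, Real.mul_self_sqrt (by norm_num)]
    norm_num
  have hinner00 : ⟪e0, e0⟫_ℂ = 1 := by rw [he0, inner_ket]; simp
  have he0u : ⟪e0, u⟫_ℂ = 0 := hketu 0 h0idx2
  have hue0 : ⟪u, e0⟫_ℂ = 0 := by rw [← inner_conj_symm, he0u, map_zero]
  have hφφ : ⟪φ, φ⟫_ℂ = 1 := by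
    rw [hφ, inner_smul_left, inner_smul_right, hc2conj, inner_add_left, inner_add_right,
      inner_add_right, hinner00, he0u, hue0, huu]
    rw [show (1 + 0 + (0 + 1) : ℂ) = 2 by ring, ← mul_assoc, hc2sq]
    norm_num
  have hketφ : ∀ i, i ∉ idx2 N M → i ≠ (0 : Fin (N + M + 1)) → ⟪ket N M i, φ⟫_ℂ = 0 := by
    intro i hi hi0
    rw [hφ, inner_smul_right, inner_add_right, he0, inner_ket, hketu i hi]
    simp [hi0]
  have hne10 : (1 : Fin (N + M + 1)) ≠ 0 := by
    intro h
    have := congrArg Fin.val h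
    rw [hval1, hval0] at this
    exact one_ne_zero this
  have hket1φ : ⟪ket N M 1, φ⟫_ℂ = 0 := hketφ 1 h1idx2 hne10
  have hne_of_idx2 : ∀ i ∈ idx2 N M, i ≠ (0 : Fin (N + M + 1)) := by
    intro i hi h
    rw [h] at hi
    exact h0idx2 hi
  have hne_of_idx3 : ∀ i ∈ idx3 N M, i ≠ (0 : Fin (N + M + 1)) := by
    intro i hi h
    rw [h] at hi
    exact h0idx3 hi
  have hψe0 : ⟪psi N M, e0⟫_ℂ = 0 := by
    rw [psi, sum_inner]
    refine Finset.sum_eq_zero fun i hi => ?_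
    rw [he0, inner_ket]
    simp [hne_of_idx2 i hi]
  have hψφ : ⟪psi N M, φ⟫_ℂ = 0 := by
    rw [hφ, inner_smul_right, inner_add_right, hψe0, hpsiu]
    simp
  have hψ'e0 : ⟪psi' N M, e0⟫_ℂ = 0 := by
    rw [psi', sum_inner]
    refine Finset.sum_eq_zero fun i hi => ?_
    rw [he0, inner_ket]
    simp [hne_of_idx3 i hi]
  have hψ'u : ⟪psi' N M, u⟫_ℂ = 0 := by
    rw [psi', sum_inner]
    exact Finset.sum_eq_zero fun i hi => hketu i (hdisj i hi)
  have hψ'φ : ⟪psi' N M, φ⟫_ℂ = 0 := by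
    rw [hφ, inner_smul_right, inner_add_right, hψ'e0, hψ'u]
    simp
  have hP2e0 : P2 N M e0 = 0 := by
    rw [P2_apply]
    refine Finset.sum_eq_zero fun i hi => ?_
    rw [he0, inner_ket]
    simp [hne_of_idx2 i hi]
  have hP3e0 : P3 N M e0 = 0 := by
    rw [P3_apply]
    refine Finset.sum_eq_zero fun i hi => ?_
    rw [he0, inner_ket]
    simp [hne_of_idx3 i hi]
  have hZe0 : Z e0 = 0 := by
    conv_lhs => rw [hZ1]
    show P3 N M (Z (P2 N M e0)) = 0
    rw [hP2e0, map_zero, map_zero]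
  have hZse0 : adjoint Z e0 = 0 := by
    rw [← inner_self_eq_zero (𝕜 := ℂ), adjoint_inner_left]
    have : Z (adjoint Z e0) = (Z * adjoint Z) e0 := rfl
    rw [this, hZ2, hP3e0, inner_zero_right]
  have hZφ : Z φ = 0 := by
    rw [hφ, map_smul, map_add, hZe0, hZu]
    simp
  have hZsφ : adjoint Z φ = 0 := by
    rw [hφ, map_smul, map_add, hZse0, hZsu]
    simp
  have hP3φ : P3 N M φ = 0 := by
    rw [hφ, map_smul, map_add, hP3e0, hP3u]
    simp
  have he0φ : ⟪e0, φ⟫_ℂ = c2 := by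
    rw [hφ, inner_smul_right, inner_add_right, hinner00, he0u]
    ring
  have hφe0 : ⟪φ, e0⟫_ℂ = c2 := by
    rw [← inner_conj_symm, he0φ, hc2conj]
  have huφ : ⟪u, φ⟫_ℂ = c2 := by
    rw [hφ, inner_smul_right, inner_add_right, hue0, huu]
    ring
  -- the state ρ = |φ⟩⟨φ|
  refine ⟨ketbra N M φ φ, ⟨?_, ?_⟩, ?_, ?_, ?_, ?_, ?_, ?_⟩
  · -- positive
    constructor
    · exact (ContinuousLinearMap.isSelfAdjoint_iff_isSymmetric).mp (isSelfAdjoint_iff'.mpr (adjoint_ketbra φ φ))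
    · intro x
      rw [ContinuousLinearMap.reApplyInnerSelf_apply, ketbra_apply, inner_smul_left]
      rw [mul_comm, Complex.mul_conj]
      simp [Complex.normSq_nonneg]
  · -- trace one
    rw [trace_ketbra, hφφ]
  · -- Lstar = 0
    have habsφ : absZ N M Z φ = 0 := by
      rw [absZ, ContinuousLinearMap.mul_apply, hZφ, map_zero]
    have hHφ0 : Heff N M γ1m γ1p γ2m γ2p γ3m Z φ = 0 := by
      rw [Heff]
      simp only [ContinuousLinearMap.sub_apply, ContinuousLinearMap.add_apply,
        ContinuousLinearMap.smul_apply, ketbra_apply, hψφ, hket1φ, hψ'φ, hP3φ, habsφ,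
        zero_smul, smul_zero]
      simp
    have hφψ2 : ⟪φ, psi N M⟫_ℂ = 0 := by rw [← inner_conj_symm, hψφ, map_zero]
    have hφ1 : ⟪φ, ket N M 1⟫_ℂ = 0 := by rw [← inner_conj_symm, hket1φ, map_zero]
    have hφψ'2 : ⟪φ, psi' N M⟫_ℂ = 0 := by rw [← inner_conj_symm, hψ'φ, map_zero]
    have hφket3 : ∀ i ∈ idx3 N M, ⟪φ, ket N M i⟫_ℂ = 0 := fun i hi => by
      rw [← inner_conj_symm, hketφ i (hdisj i hi) (hne_of_idx3 i hi), map_zero]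
    have hφP3 : ∀ y, ⟪φ, P3 N M y⟫_ℂ = 0 := by
      intro y
      rw [P3_apply, inner_sum]
      refine Finset.sum_eq_zero fun i hi => ?_
      rw [inner_smul_right, hφket3 i hi, mul_zero]
    have hφabs : ∀ y, ⟪φ, absZ N M Z y⟫_ℂ = 0 := by
      intro y
      rw [absZ, ContinuousLinearMap.mul_apply, adjoint_inner_right, hZφ, inner_zero_left]
    have hφHx : ∀ x, ⟪φ, Heff N M γ1m γ1p γ2m γ2p γ3m Z x⟫_ℂ = 0 := by
      intro x
      rw [Heff]
      simp only [ContinuousLinearMap.sub_apply, ContinuousLinearMap.add_apply,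
        ContinuousLinearMap.smul_apply, ketbra_apply, inner_sub_right, inner_add_right,
        inner_smul_right, hφP3, hφabs, hφψ2, hφ1, hφψ'2]
      ring
    have hkraus : ∀ k : Fin 5, kraus N M Γ1m Γ1p Γ2m Γ2p Γ3m Z k φ = 0 := by
      intro k
      fin_cases k
      · show (((Real.sqrt (2 * Γ1m) : ℝ) : ℂ) • ketbra N M (psi N M) (ket N M 1)) φ = 0
        rw [ContinuousLinearMap.smul_apply, ketbra_apply, hket1φ, zero_smul, smul_zero]
      · show (((Real.sqrt (2 * ((N : ℝ) - 1) * Γ2m) : ℝ) : ℂ) • Z) φ = 0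
        rw [ContinuousLinearMap.smul_apply, hZφ, smul_zero]
      · show (((Real.sqrt (2 * Γ3m) : ℝ) : ℂ) • ketbra N M (ket N M 0) (psi' N M)) φ = 0
        rw [ContinuousLinearMap.smul_apply, ketbra_apply, hψ'φ, zero_smul, smul_zero]
      · show (((Real.sqrt (2 * Γ1p) : ℝ) : ℂ) • ketbra N M (ket N M 1) (psi N M)) φ = 0
        rw [ContinuousLinearMap.smul_apply, ketbra_apply, hψφ, zero_smul, smul_zero]
      · show (((Real.sqrt (2 * ((N : ℝ) - 1) * Γ2p) : ℝ) : ℂ) • adjoint Z) φ = 0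
        rw [ContinuousLinearMap.smul_apply, hZsφ, smul_zero]
    rw [Lstar]
    have h1 : Heff N M γ1m γ1p γ2m γ2p γ3m Z * ketbra N M φ φ
        - ketbra N M φ φ * Heff N M γ1m γ1p γ2m γ2p γ3m Z = 0 := by
      rw [mul_ketbra_eq_zero hHφ0, ketbra_mul_eq_zero hφHx, sub_zero]
    have h2 : ∑ k : Fin 5,
        (kraus N M Γ1m Γ1p Γ2m Γ2p Γ3m Z k * ketbra N M φ φ *
            adjoint (kraus N M Γ1m Γ1p Γ2m Γ2p Γ3m Z k)
          - (1 / 2 : ℂ) • (adjoint (kraus N M Γ1m Γ1p Γ2m Γ2p Γ3m Z k) *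
                kraus N M Γ1m Γ1p Γ2m Γ2p Γ3m Z k * ketbra N M φ φ
              + ketbra N M φ φ * (adjoint (kraus N M Γ1m Γ1p Γ2m Γ2p Γ3m Z k) *
                kraus N M Γ1m Γ1p Γ2m Γ2p Γ3m Z k))) = 0 :=
      Fintype.sum_eq_zero _ fun k => summand_zero (hkraus k)
    rw [h1, h2]
    refine ContinuousLinearMap.ext fun x => ?_
    simp
  · -- trace ρ L1 = 0
    have h : ketbra N M φ φ * ketbra N M (psi N M) (ket N M 1) = 0 := by
      refine ketbra_mul_eq_zero fun x => ?_
      rw [ketbra_apply, inner_smul_right, ← inner_conj_symm φ, hψφ, map_zero, mul_zero]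
    rw [h]
    simp
  · -- trace ρ Z = 0
    have h : ketbra N M φ φ * Z = 0 := by
      refine ketbra_mul_eq_zero fun x => ?_
      rw [← adjoint_inner_left, hZsφ, inner_zero_left]
    rw [h]
    simp
  · -- trace ρ |e0><ψ'| = 0
    have h : ketbra N M φ φ * ketbra N M (ket N M 0) (psi' N M)
        = ketbra N M (⟪φ, e0⟫_ℂ • φ) (psi' N M) := by
      refine ContinuousLinearMap.ext fun x => ?_
      simp only [ContinuousLinearMap.mul_apply, ketbra_apply, map_smul, inner_smul_right,
        ← he0, smul_smul]
    rw [h, trace_ketbra, inner_smul_right, hψ'φ, mul_zero]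
  · -- does not commute with P0
    intro h
    have hP0e0 : P0 N M e0 = e0 := by
      rw [P0, ← he0, ketbra_apply, hinner00, one_smul]
    have hP0φ : P0 N M φ = c2 • e0 := by
      rw [P0, ← he0, ketbra_apply, he0φ]
    have hL : (ketbra N M φ φ * P0 N M) e0 = c2 • φ := by
      rw [ContinuousLinearMap.mul_apply, hP0e0, ketbra_apply, hφe0]
    have hR : (P0 N M * ketbra N M φ φ) e0 = (c2 * c2) • e0 := by
      rw [ContinuousLinearMap.mul_apply, ketbra_apply, hφe0, map_smul, hP0φ, smul_smul]
    rw [h, hR] at hL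
    have h2 := congrArg (fun y => ⟪u, y⟫_ℂ) hL
    simp only [inner_smul_right, hue0, huφ, mul_zero] at h2
    rw [hc2sq] at h2
    norm_num at h2
  · -- does not commute with the reference Hamiltonian
    intro ε1 ε2 ε3 hε1 hε2 hε3 _ _ _ h
    have hP1e0 : P1 N M e0 = 0 := by
      rw [P1, ketbra_apply, he0, inner_ket, if_neg hne10, zero_smul]
    have hP1φ : P1 N M φ = 0 := by rw [P1, ketbra_apply, hket1φ, zero_smul]
    have hP2φ : P2 N M φ = c2 • u := by
      rw [hφ, map_smul, map_add, hP2e0, hP2u, zero_add]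
    have hHe0 : ((ε1 : ℂ) • P1 N M + (ε2 : ℂ) • P2 N M + (ε3 : ℂ) • P3 N M) e0 = 0 := by
      rw [ContinuousLinearMap.add_apply, ContinuousLinearMap.add_apply,
        ContinuousLinearMap.smul_apply, ContinuousLinearMap.smul_apply,
        ContinuousLinearMap.smul_apply, hP1e0, hP2e0, hP3e0, smul_zero, smul_zero, smul_zero,
        add_zero, add_zero]
    have hHφ : ((ε1 : ℂ) • P1 N M + (ε2 : ℂ) • P2 N M + (ε3 : ℂ) • P3 N M) φ
        = ((ε2 : ℂ) * c2) • u := by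
      rw [ContinuousLinearMap.add_apply, ContinuousLinearMap.add_apply,
        ContinuousLinearMap.smul_apply, ContinuousLinearMap.smul_apply,
        ContinuousLinearMap.smul_apply, hP1φ, hP2φ, hP3φ, smul_zero, smul_zero, smul_smul,
        add_zero, zero_add]
    have hL : (ketbra N M φ φ *
        ((ε1 : ℂ) • P1 N M + (ε2 : ℂ) • P2 N M + (ε3 : ℂ) • P3 N M)) e0 = 0 := by
      rw [ContinuousLinearMap.mul_apply, hHe0, map_zero]
    have hR : (((ε1 : ℂ) • P1 N M + (ε2 : ℂ) • P2 N M + (ε3 : ℂ) • P3 N M) *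
        ketbra N M φ φ) e0 = (c2 * ((ε2 : ℂ) * c2)) • u := by
      rw [ContinuousLinearMap.mul_apply, ketbra_apply, hφe0, map_smul, hHφ, smul_smul]
    rw [h, hR] at hL
    have h2 := congrArg (fun y => ⟪u, y⟫_ℂ) hL
    simp only [inner_smul_right, huu, mul_one, inner_zero_right] at h2
    have h3 : (ε2 : ℂ) * (c2 * c2) = 0 := by linear_combination h2
    rw [hc2sq] at h3
    have h4 : (ε2 : ℂ) = 0 := by linear_combination 2 * h3
    have h5 : ε2 = 0 := by exact_mod_cast h4
    linarith

end AKV
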